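/- For positive semidefinite matrices A, B on a finite-dimensional Hilbert space and α ∈ [0,1], one has Tr(A^α B^{1−α}) ≤ (Tr A)^α (Tr B)^{1−α}, where powers are taken on supports (with convention 0^0 = 0 for matrices). Moreover, if supp A ≤ supp B and α ∈ (0,1), equality holds if and only if A is a nonnegative scalar multiple of B. -/

import Mathlib

open Matrix ComplexOrder

/-- Two-point weighted AM–GM with equality characterization. -/
lemma amgm2_eq {α : ℝ} (hα0 : 0 < α) (hα1 : α < 1) {u v : ℝ} (hu : 0 ≤ u) (hv : 0 ≤ v) :
    u ^ α * v ^ (1 - α) ≤ α * u + (1 - α) * v ∧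
      (u ^ α * v ^ (1 - α) = α * u + (1 - α) * v ↔ u = v) := by
  rcases hv.eq_or_lt with rfl | hv
  · rw [Real.zero_rpow (by linarith : (1:ℝ) - α ≠ 0), mul_zero, mul_zero, add_zero]
    refine ⟨by positivity, ?_, ?_⟩
    · intro h
      have huα : u ^ α ≥ 0 := Real.rpow_nonneg hu α
      nlinarith [h]
    · rintro rfl; simp [Real.zero_rpow hα0.ne']
  · set t := u / v with ht
    have htnn : 0 ≤ t := div_nonneg hu hv.le
    have hut : u = t * v := by rw [ht]; field_simp
    have key : t ^ α ≤ α * t + (1 - α) ∧ (t ^ α = α * t + (1 - α) ↔ t = 1) := by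
      rcases eq_or_ne t 1 with h1 | htne
      · rw [h1]; simp
      · have hs : (-1 : ℝ) ≤ t - 1 := by linarith
        have hs' : t - 1 ≠ 0 := sub_ne_zero.mpr htne
        have hkey := rpow_one_add_lt_one_add_mul_self hs hs' hα0 hα1
        have h11 : (1 : ℝ) + (t - 1) = t := by ring
        rw [h11] at hkey
        exact ⟨by nlinarith, by constructor; · intro h; nlinarith
                                · intro h; exact absurd h htne⟩
    have hlhs : u ^ α * v ^ (1 - α) = t ^ α * v := by
      rw [hut, Real.mul_rpow htnn hv.le, mul_assoc, ← Real.rpow_add hv]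
      norm_num
    have hrhs : α * u + (1 - α) * v = (α * t + (1 - α)) * v := by rw [hut]; ring
    rw [hlhs, hrhs]
    refine ⟨mul_le_mul_of_nonneg_right key.1 hv.le, ?_⟩
    rw [mul_left_inj' hv.ne', key.2, ht, div_eq_one_iff_eq hv.ne']

/-- Finite Hölder inequality with equality characterization. -/
lemma holder_finset_eq {ι : Type*} (s : Finset ι) (x y : ι → ℝ) (hx : ∀ i ∈ s, 0 ≤ x i)
    (hy : ∀ i ∈ s, 0 ≤ y i) {α : ℝ} (hα0 : 0 < α) (hα1 : α < 1) :
    (∑ i ∈ s, x i ^ α * y i ^ (1 - α)) ≤ (∑ i ∈ s, x i) ^ α * (∑ i ∈ s, y i) ^ (1 - α) ∧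
    ((∑ i ∈ s, x i ^ α * y i ^ (1 - α)) = (∑ i ∈ s, x i) ^ α * (∑ i ∈ s, y i) ^ (1 - α) ↔
      ∀ i ∈ s, (∑ j ∈ s, y j) * x i = (∑ j ∈ s, x j) * y i) := by
  set X := ∑ i ∈ s, x i with hX
  set Y := ∑ i ∈ s, y i with hY
  have hXnn : 0 ≤ X := Finset.sum_nonneg hx
  have hYnn : 0 ≤ Y := Finset.sum_nonneg hy
  rcases hXnn.eq_or_lt with hX0 | hXpos
  · have hx0 : ∀ i ∈ s, x i = 0 :=
      (Finset.sum_eq_zero_iff_of_nonneg hx).mp hX0.symm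
    have hL : (∑ i ∈ s, x i ^ α * y i ^ (1 - α)) = 0 := by
      refine Finset.sum_eq_zero fun i hi => ?_
      rw [hx0 i hi, Real.zero_rpow hα0.ne', zero_mul]
    rw [hL, ← hX0, Real.zero_rpow hα0.ne', zero_mul]
    exact ⟨le_rfl, by
      constructor
      · intro _ i hi; rw [hx0 i hi]; ring
      · intro _; rfl⟩
  rcases hYnn.eq_or_lt with hY0 | hYpos
  · have hy0 : ∀ i ∈ s, y i = 0 :=
      (Finset.sum_eq_zero_iff_of_nonneg hy).mp hY0.symm
    have hL : (∑ i ∈ s, x i ^ α * y i ^ (1 - α)) = 0 := by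
      refine Finset.sum_eq_zero fun i hi => ?_
      rw [hy0 i hi, Real.zero_rpow (by linarith : (1:ℝ) - α ≠ 0), mul_zero]
    rw [hL, ← hY0, Real.zero_rpow (by linarith : (1:ℝ) - α ≠ 0), mul_zero]
    exact ⟨le_rfl, by
      constructor
      · intro _ i hi; rw [hy0 i hi]; ring
      · intro _; rfl⟩
  · -- X > 0, Y > 0
    have hC : 0 < X ^ α * Y ^ (1 - α) := by positivity
    have hterm : ∀ i ∈ s,
        x i ^ α * y i ^ (1 - α)
          = (x i / X) ^ α * (y i / Y) ^ (1 - α) * (X ^ α * Y ^ (1 - α)) := by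
      intro i hi
      have hXα : X ^ α ≠ 0 := (Real.rpow_pos_of_pos hXpos α).ne'
      have hYα : Y ^ (1 - α) ≠ 0 := (Real.rpow_pos_of_pos hYpos _).ne'
      rw [Real.div_rpow (hx i hi) hXnn, Real.div_rpow (hy i hi) hYnn]
      field_simp
      try ring
    have hpt : ∀ i ∈ s,
        x i ^ α * y i ^ (1 - α) ≤
          (α * (x i / X) + (1 - α) * (y i / Y)) * (X ^ α * Y ^ (1 - α)) ∧
        (x i ^ α * y i ^ (1 - α) =
          (α * (x i / X) + (1 - α) * (y i / Y)) * (X ^ α * Y ^ (1 - α)) ↔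
          Y * x i = X * y i) := by
      intro i hi
      have hu : 0 ≤ x i / X := div_nonneg (hx i hi) hXnn
      have hv : 0 ≤ y i / Y := div_nonneg (hy i hi) hYnn
      obtain ⟨h1, h2⟩ := amgm2_eq hα0 hα1 hu hv
      rw [hterm i hi]
      constructor
      · exact mul_le_mul_of_nonneg_right h1 hC.le
      · rw [mul_left_inj' hC.ne', h2, div_eq_div_iff hXpos.ne' hYpos.ne']
        constructor
        · intro h; linarith [h]
        · intro h; linarith [h]
    have hsum : (∑ i ∈ s, (α * (x i / X) + (1 - α) * (y i / Y)) * (X ^ α * Y ^ (1 - α)))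
        = X ^ α * Y ^ (1 - α) := by
      rw [← Finset.sum_mul]
      have : (∑ i ∈ s, (α * (x i / X) + (1 - α) * (y i / Y))) = 1 := by
        rw [Finset.sum_add_distrib, ← Finset.mul_sum, ← Finset.mul_sum,
          ← Finset.sum_div, ← Finset.sum_div, ← hX, ← hY,
          div_self hXpos.ne', div_self hYpos.ne']
        ring
      rw [this, one_mul]
    constructor
    · calc (∑ i ∈ s, x i ^ α * y i ^ (1 - α))
          ≤ ∑ i ∈ s, (α * (x i / X) + (1 - α) * (y i / Y)) * (X ^ α * Y ^ (1 - α)) :=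
            Finset.sum_le_sum fun i hi => (hpt i hi).1
        _ = X ^ α * Y ^ (1 - α) := hsum
    · rw [← hsum]
      rw [Finset.sum_eq_sum_iff_of_le fun i hi => (hpt i hi).1]
      exact ⟨fun h i hi => ((hpt i hi).2).mp (h i hi),
        fun h i hi => ((hpt i hi).2).mpr (h i hi)⟩

namespace TraceHolderAux

variable {n : ℕ}

lemma sum_normSq_row {W : Matrix (Fin n) (Fin n) ℂ} (hW : W ∈ Matrix.unitaryGroup (Fin n) ℂ)
    (i : Fin n) : ∑ j, Complex.normSq (W i j) = 1 := by
  have h := Matrix.mem_unitaryGroup_iff.mp hW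
  have h2 : (W * star W) i i = (1 : Matrix (Fin n) (Fin n) ℂ) i i := by rw [h]
  rw [Matrix.mul_apply, Matrix.one_apply_eq] at h2
  have h3 : ∑ j, (Complex.normSq (W i j) : ℂ) = 1 := by
    rw [← h2]
    refine Finset.sum_congr rfl fun j _ => ?_
    rw [Matrix.star_apply, Complex.star_def, Complex.mul_conj]
  exact_mod_cast h3

lemma sum_normSq_col {W : Matrix (Fin n) (Fin n) ℂ} (hW : W ∈ Matrix.unitaryGroup (Fin n) ℂ)
    (j : Fin n) : ∑ i, Complex.normSq (W i j) = 1 := by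
  have h := Matrix.mem_unitaryGroup_iff'.mp hW
  have h2 : (star W * W) j j = (1 : Matrix (Fin n) (Fin n) ℂ) j j := by rw [h]
  rw [Matrix.mul_apply, Matrix.one_apply_eq] at h2
  have h3 : ∑ i, (Complex.normSq (W i j) : ℂ) = 1 := by
    rw [← h2]
    refine Finset.sum_congr rfl fun i _ => ?_
    rw [Matrix.star_apply, Complex.star_def, mul_comm, Complex.mul_conj]
  exact_mod_cast h3

lemma trace_formula (U V : Matrix.unitaryGroup (Fin n) ℂ) (d e : Fin n → ℝ) :
    ((U : Matrix (Fin n) (Fin n) ℂ) * Matrix.diagonal (fun i => (d i : ℂ))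
        * star (U : Matrix (Fin n) (Fin n) ℂ)
      * ((V : Matrix (Fin n) (Fin n) ℂ) * Matrix.diagonal (fun j => (e j : ℂ))
        * star (V : Matrix (Fin n) (Fin n) ℂ))).trace
    = ((∑ i, ∑ j, d i * e j * Complex.normSq
        ((star (U : Matrix (Fin n) (Fin n) ℂ) * (V : Matrix (Fin n) (Fin n) ℂ)) i j) : ℝ) : ℂ) := by
  set U' := (U : Matrix (Fin n) (Fin n) ℂ) with hU'
  set V' := (V : Matrix (Fin n) (Fin n) ℂ) with hV'
  have hUU : U' * star U' = 1 := Matrix.mem_unitaryGroup_iff.mp U.2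
  have hUU' : star U' * U' = 1 := Matrix.mem_unitaryGroup_iff'.mp U.2
  set d' := fun i => (d i : ℂ) with hd'
  set e' := fun j => (e j : ℂ) with he'
  have hsW : star (star U' * V') = star V' * U' := by rw [Matrix.star_mul, star_star]
  have h1 : U' * (Matrix.diagonal d' * (star U' * V') * Matrix.diagonal e'
        * star (star U' * V')) * star U'
      = U' * Matrix.diagonal d' * star U' * (V' * Matrix.diagonal e' * star V') := by
    rw [hsW]
    simp only [Matrix.mul_assoc]
    rw [hUU]
    simp only [Matrix.mul_one]
  have h2 : (U' * (Matrix.diagonal d' * (star U' * V') * Matrix.diagonal e'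
        * star (star U' * V')) * star U').trace
      = (Matrix.diagonal d' * (star U' * V') * Matrix.diagonal e'
        * star (star U' * V')).trace := by
    rw [Matrix.trace_mul_cycle, ← Matrix.mul_assoc, hUU', Matrix.one_mul]
  rw [← h1, h2]
  have h3 : (Matrix.diagonal d' * (star U' * V') * Matrix.diagonal e'
        * star (star U' * V')).trace
      = ∑ i, ∑ j, d' i * e' j * ((star U' * V') i j * star ((star U' * V') i j)) := by
    rw [Matrix.trace]
    refine Finset.sum_congr rfl fun i _ => ?_
    rw [Matrix.diag_apply, Matrix.mul_apply]
    refine Finset.sum_congr rfl fun j _ => ?_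
    rw [Matrix.mul_diagonal, Matrix.diagonal_mul, Matrix.star_apply]
    ring
  rw [h3]
  push_cast
  refine Finset.sum_congr rfl fun i _ => Finset.sum_congr rfl fun j _ => ?_
  rw [Complex.star_def, Complex.mul_conj]

lemma smul_iff (U V : Matrix.unitaryGroup (Fin n) ℂ) (d e : Fin n → ℂ) (c : ℂ) :
    (U : Matrix (Fin n) (Fin n) ℂ) * Matrix.diagonal d * star (U : Matrix (Fin n) (Fin n) ℂ)
      = c • ((V : Matrix (Fin n) (Fin n) ℂ) * Matrix.diagonal e
          * star (V : Matrix (Fin n) (Fin n) ℂ)) ↔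
    ∀ i j, d i * ((star (U : Matrix (Fin n) (Fin n) ℂ) * (V : Matrix (Fin n) (Fin n) ℂ)) i j)
      = c * (((star (U : Matrix (Fin n) (Fin n) ℂ) * (V : Matrix (Fin n) (Fin n) ℂ)) i j) * e j) := by
  set U' := (U : Matrix (Fin n) (Fin n) ℂ) with hU'
  set V' := (V : Matrix (Fin n) (Fin n) ℂ) with hV'
  have hUU : U' * star U' = 1 := Matrix.mem_unitaryGroup_iff.mp U.2
  have hUU' : star U' * U' = 1 := Matrix.mem_unitaryGroup_iff'.mp U.2
  have hVV : V' * star V' = 1 := Matrix.mem_unitaryGroup_iff.mp V.2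
  have hVV' : star V' * V' = 1 := Matrix.mem_unitaryGroup_iff'.mp V.2
  have e1 : star U' * (U' * Matrix.diagonal d * star U') * V'
      = Matrix.diagonal d * (star U' * V') := by
    calc star U' * (U' * Matrix.diagonal d * star U') * V'
        = star U' * U' * (Matrix.diagonal d * (star U' * V')) := by
          simp only [Matrix.mul_assoc]
      _ = Matrix.diagonal d * (star U' * V') := by rw [hUU', Matrix.one_mul]
  have e2 : star U' * (V' * Matrix.diagonal e * star V') * V'
      = (star U' * V') * Matrix.diagonal e := by
    calc star U' * (V' * Matrix.diagonal e * star V') * V'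
        = star U' * (V' * (Matrix.diagonal e * (star V' * V'))) := by
          simp only [Matrix.mul_assoc]
      _ = (star U' * V') * Matrix.diagonal e := by
          rw [hVV', Matrix.mul_one, Matrix.mul_assoc]
  have e3 : U' * (Matrix.diagonal d * (star U' * V')) * star V'
      = U' * Matrix.diagonal d * star U' := by
    calc U' * (Matrix.diagonal d * (star U' * V')) * star V'
        = U' * Matrix.diagonal d * star U' * (V' * star V') := by
          simp only [Matrix.mul_assoc]
      _ = U' * Matrix.diagonal d * star U' := by rw [hVV, Matrix.mul_one]
  have e4 : U' * ((star U' * V') * Matrix.diagonal e) * star V'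
      = V' * Matrix.diagonal e * star V' := by
    calc U' * ((star U' * V') * Matrix.diagonal e) * star V'
        = U' * star U' * (V' * (Matrix.diagonal e * star V')) := by
          simp only [Matrix.mul_assoc]
      _ = V' * Matrix.diagonal e * star V' := by
          rw [hUU, Matrix.one_mul, Matrix.mul_assoc]
  have key : U' * Matrix.diagonal d * star U' = c • (V' * Matrix.diagonal e * star V') ↔
      Matrix.diagonal d * (star U' * V') = c • ((star U' * V') * Matrix.diagonal e) := by
    constructor
    · intro h
      have h' := congrArg (fun Z => star U' * Z * V') h
      simp only [Matrix.mul_smul, Matrix.smul_mul] at h'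
      rw [e1, e2] at h'
      exact h'
    · intro h
      have h' := congrArg (fun Z => U' * Z * star V') h
      simp only [Matrix.mul_smul, Matrix.smul_mul] at h'
      rw [e3, e4] at h'
      exact h'
  rw [key]
  constructor
  · intro h i j
    have := (Matrix.ext_iff.mpr h) i j
    simpa only [Matrix.diagonal_mul, Matrix.smul_apply, Matrix.mul_diagonal,
      smul_eq_mul] using this
  · intro h
    ext i j
    simpa only [Matrix.diagonal_mul, Matrix.smul_apply, Matrix.mul_diagonal,
      smul_eq_mul] using h i j

end TraceHolderAux

/-- The power `A^α` of a positive semidefinite matrix taken on its support (so that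
`A^0` is the support projection; in particular `0^0 = 0` at the scalar level). -/
noncomputable def suppPow {n : ℕ} (A : Matrix (Fin n) (Fin n) ℂ) (α : ℝ) :
    Matrix (Fin n) (Fin n) ℂ :=
  cfc (fun r : ℝ => if r = 0 then 0 else r ^ α) A

/-- **Trace Hölder inequality and its equality case.** For positive semidefinite `A, B`
and `α ∈ [0,1]`, `Tr (A^α B^{1−α}) ≤ (Tr A)^α (Tr B)^{1−α}` (powers of matrices taken on
supports).  Moreover, if `supp A ≤ supp B` and `α ∈ (0,1)`, equality holds iff `A` is a
nonnegative scalar multiple of `B`. -/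
theorem trace_holder_inequality {n : ℕ} (A B : Matrix (Fin n) (Fin n) ℂ)
    (hA : A.PosSemidef) (hB : B.PosSemidef) (α : ℝ) (hα0 : 0 ≤ α) (hα1 : α ≤ 1) :
    (suppPow A α * suppPow B (1 - α)).trace ≤
      ((A.trace.re ^ α * B.trace.re ^ (1 - α) : ℝ) : ℂ) ∧
    (LinearMap.range A.mulVecLin ≤ LinearMap.range B.mulVecLin → 0 < α → α < 1 →
      ((suppPow A α * suppPow B (1 - α)).trace =
          ((A.trace.re ^ α * B.trace.re ^ (1 - α) : ℝ) : ℂ) ↔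
        ∃ c : ℝ, 0 ≤ c ∧ A = (c : ℝ) • B)) := by
  classical
  have hAh : A.IsHermitian := hA.1
  have hBh : B.IsHermitian := hB.1
  set g : ℝ → ℝ → ℝ := fun β r => if r = 0 then 0 else r ^ β with hg
  set U := hAh.eigenvectorUnitary with hU
  set V := hBh.eigenvectorUnitary with hV
  set a := hAh.eigenvalues with ha'
  set b := hBh.eigenvalues with hb'
  have ha : ∀ i, 0 ≤ a i := fun i => hA.eigenvalues_nonneg i
  have hb : ∀ j, 0 ≤ b j := fun j => hB.eigenvalues_nonneg j
  set U' := (U : Matrix (Fin n) (Fin n) ℂ) with hU'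
  set V' := (V : Matrix (Fin n) (Fin n) ℂ) with hV'
  have hArep : A = U' * Matrix.diagonal (fun i => ((a i : ℝ) : ℂ)) * star U' :=
    hAh.spectral_theorem
  have hBrep : B = V' * Matrix.diagonal (fun j => ((b j : ℝ) : ℂ)) * star V' :=
    hBh.spectral_theorem
  have hWmem : star U' * V' ∈ Matrix.unitaryGroup (Fin n) ℂ :=
    mul_mem (Unitary.star_mem U.2) V.2
  set t : Fin n → Fin n → ℝ := fun i j => Complex.normSq ((star U' * V') i j) with htdef
  have ht : ∀ i j, 0 ≤ t i j := fun i j => Complex.normSq_nonneg _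
  have htrow : ∀ i, ∑ j, t i j = 1 := fun i => TraceHolderAux.sum_normSq_row hWmem i
  have htcol : ∀ j, ∑ i, t i j = 1 := fun j => TraceHolderAux.sum_normSq_col hWmem j
  -- suppPow in spectral form
  have hsuppA : ∀ β : ℝ, suppPow A β
      = U' * Matrix.diagonal (fun i => ((g β (a i) : ℝ) : ℂ)) * star U' := by
    intro β
    rw [suppPow, hAh.cfc_eq, Matrix.IsHermitian.cfc]
    rfl
  have hsuppB : ∀ β : ℝ, suppPow B β
      = V' * Matrix.diagonal (fun j => ((g β (b j) : ℝ) : ℂ)) * star V' := by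
    intro β
    rw [suppPow, hBh.cfc_eq, Matrix.IsHermitian.cfc]
    rfl
  -- trace formula
  have key : ∀ β γ : ℝ, (suppPow A β * suppPow B γ).trace
      = ((∑ i, ∑ j, g β (a i) * g γ (b j) * t i j : ℝ) : ℂ) := by
    intro β γ
    rw [hsuppA β, hsuppB γ]
    exact TraceHolderAux.trace_formula U V (fun i => g β (a i)) (fun j => g γ (b j))
  set Ta := ∑ i, a i with hTa
  set Tb := ∑ j, b j with hTb
  have hTann : 0 ≤ Ta := Finset.sum_nonneg fun i _ => ha i
  have hTbnn : 0 ≤ Tb := Finset.sum_nonneg fun j _ => hb j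
  have htrA : A.trace = ((Ta : ℝ) : ℂ) := by
    conv_lhs => rw [hArep]
    rw [Matrix.trace_mul_cycle,
      Matrix.mem_unitaryGroup_iff'.mp U.2, Matrix.one_mul, Matrix.trace_diagonal, hTa]
    push_cast
    rfl
  have htrB : B.trace = ((Tb : ℝ) : ℂ) := by
    conv_lhs => rw [hBrep]
    rw [Matrix.trace_mul_cycle,
      Matrix.mem_unitaryGroup_iff'.mp V.2, Matrix.one_mul, Matrix.trace_diagonal, hTb]
    push_cast
    rfl
  have htAre : A.trace.re = Ta := by rw [htrA]; exact Complex.ofReal_re _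
  have htBre : B.trace.re = Tb := by rw [htrB]; exact Complex.ofReal_re _
  have bridge : ∀ c : ℂ, A = c • B ↔
      ∀ i j, ((a i : ℝ) : ℂ) * ((star U' * V') i j)
        = c * (((star U' * V') i j) * ((b j : ℝ) : ℂ)) := by
    intro c
    have h1 := TraceHolderAux.smul_iff U V (fun i => ((a i : ℝ) : ℂ))
      (fun j => ((b j : ℝ) : ℂ)) c
    rw [← hArep, ← hBrep] at h1
    exact h1
  -- the (0,1) core
  have core : ∀ (h0 : 0 < α) (h1 : α < 1),
      ((∑ i, ∑ j, g α (a i) * g (1 - α) (b j) * t i j) ≤ Ta ^ α * Tb ^ (1 - α) ∧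
      ((∑ i, ∑ j, g α (a i) * g (1 - α) (b j) * t i j) = Ta ^ α * Tb ^ (1 - α) ↔
        ∀ i j, Tb * (a i * t i j) = Ta * (b j * t i j))) := by
    intro h0 h1
    have hgeq : ∀ (β : ℝ), β ≠ 0 → ∀ r : ℝ, g β r = r ^ β := by
      intro β hβ r
      by_cases h : r = 0
      · simp [hg, h, Real.zero_rpow hβ]
      · simp [hg, h]
    have hterm : ∀ i j, g α (a i) * g (1 - α) (b j) * t i j
        = (a i * t i j) ^ α * (b j * t i j) ^ (1 - α) := by
      intro i j
      have h2 : t i j ^ α * t i j ^ (1 - α) = t i j := by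
        rw [← Real.rpow_add' (ht i j) (by norm_num : α + (1 - α) ≠ 0)]
        norm_num
      rw [hgeq α h0.ne' _, hgeq (1 - α) (by linarith) _,
          Real.mul_rpow (ha i) (ht i j), Real.mul_rpow (hb j) (ht i j)]
      conv_lhs => rw [← h2]
      ring
    obtain ⟨hle, hiff⟩ := holder_finset_eq (Finset.univ : Finset (Fin n × Fin n))
      (fun p => a p.1 * t p.1 p.2) (fun p => b p.2 * t p.1 p.2)
      (fun p _ => mul_nonneg (ha p.1) (ht p.1 p.2))
      (fun p _ => mul_nonneg (hb p.2) (ht p.1 p.2)) h0 h1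
    have hsx : ∑ p : Fin n × Fin n, a p.1 * t p.1 p.2 = Ta := by
      rw [Fintype.sum_prod_type, hTa]
      refine Finset.sum_congr rfl fun i _ => ?_
      show (∑ y : Fin n, a i * t i y) = a i
      rw [← Finset.mul_sum, htrow i, mul_one]
    have hsy : ∑ p : Fin n × Fin n, b p.2 * t p.1 p.2 = Tb := by
      rw [Fintype.sum_prod_type, Finset.sum_comm, hTb]
      refine Finset.sum_congr rfl fun j _ => ?_
      show (∑ y : Fin n, b j * t y j) = b j
      rw [← Finset.mul_sum, htcol j, mul_one]
    have hsum : (∑ i, ∑ j, g α (a i) * g (1 - α) (b j) * t i j)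
        = ∑ p : Fin n × Fin n, (a p.1 * t p.1 p.2) ^ α * (b p.2 * t p.1 p.2) ^ (1 - α) := by
      rw [Fintype.sum_prod_type]
      exact Finset.sum_congr rfl fun i _ => Finset.sum_congr rfl fun j _ => hterm i j
    rw [hsx, hsy] at hle hiff
    constructor
    · rw [hsum]; exact hle
    · rw [hsum, hiff]
      constructor
      · intro h i j; exact h (i, j) (Finset.mem_univ _)
      · intro h p _; exact h p.1 p.2
  constructor
  · -- the inequality
    rw [key α (1 - α), htAre, htBre, Complex.real_le_real]
    rcases eq_or_lt_of_le hα0 with h0 | h0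
    · -- α = 0
      subst h0
      have hgb : ∀ j, g (1 - 0) (b j) = b j := by
        intro j
        by_cases h : b j = 0 <;> simp [hg, h]
      have hbound : ∀ i j, g 0 (a i) * g (1 - 0) (b j) * t i j ≤ b j * t i j := by
        intro i j
        rw [hgb j, mul_assoc]
        have h1 : g 0 (a i) ≤ 1 := by
          by_cases h : a i = 0 <;> simp [hg, h]
        exact mul_le_of_le_one_left (mul_nonneg (hb j) (ht i j)) h1
      calc (∑ i, ∑ j, g 0 (a i) * g (1 - 0) (b j) * t i j)
          ≤ ∑ i, ∑ j, b j * t i j :=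
            Finset.sum_le_sum fun i _ => Finset.sum_le_sum fun j _ => hbound i j
        _ = Tb := by
            rw [Finset.sum_comm]
            refine (Finset.sum_congr rfl fun j _ => ?_)
            rw [← Finset.mul_sum, htcol j, mul_one]
        _ ≤ Ta ^ (0:ℝ) * Tb ^ (1 - (0:ℝ)) := by
            rw [Real.rpow_zero, one_mul]
            norm_num
    rcases eq_or_lt_of_le hα1 with h1 | h1
    · -- α = 1
      subst h1
      have hga : ∀ i, g 1 (a i) = a i := by
        intro i
        by_cases h : a i = 0 <;> simp [hg, h]
      have hbound : ∀ i j, g 1 (a i) * g (1 - 1) (b j) * t i j ≤ a i * t i j := by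
        intro i j
        rw [hga i]
        have h1 : g (1 - 1) (b j) ≤ 1 := by
          by_cases h : b j = 0 <;> simp [hg, h]
        calc a i * g (1 - 1) (b j) * t i j = g (1 - 1) (b j) * (a i * t i j) := by ring
          _ ≤ a i * t i j := mul_le_of_le_one_left (mul_nonneg (ha i) (ht i j)) h1
      calc (∑ i, ∑ j, g 1 (a i) * g (1 - 1) (b j) * t i j)
          ≤ ∑ i, ∑ j, a i * t i j :=
            Finset.sum_le_sum fun i _ => Finset.sum_le_sum fun j _ => hbound i j
        _ = Ta := by
            refine (Finset.sum_congr rfl fun i _ => ?_)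
            rw [← Finset.mul_sum, htrow i, mul_one]
        _ ≤ Ta ^ (1:ℝ) * Tb ^ (1 - (1:ℝ)) := by
            rw [Real.rpow_one]
            norm_num [Real.rpow_zero]
    · exact (core h0 h1).1
  · -- the equality case
    intro hrange h0 h1
    rw [key α (1 - α), htAre, htBre, Complex.ofReal_inj, (core h0 h1).2]
    have hsmul : ∀ (r : ℝ) (M : Matrix (Fin n) (Fin n) ℂ), r • M = (r : ℂ) • M := by
      intro r M
      ext i j
      simp [Complex.real_smul]
    constructor
    · intro hC
      by_cases hTb0 : Tb = 0
      · have hb0 : ∀ j, b j = 0 := by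
          intro j
          exact (Finset.sum_eq_zero_iff_of_nonneg fun j _ => hb j).mp hTb0 j (Finset.mem_univ j)
        have hB0 : B = 0 := by
          rw [hBrep, show Matrix.diagonal (fun j => ((b j : ℝ) : ℂ)) = 0 by
            rw [show (fun j => ((b j : ℝ) : ℂ)) = fun _ => (0:ℂ) from funext fun j => by
              rw [hb0 j]; simp, Matrix.diagonal_zero]]
          rw [Matrix.mul_zero, Matrix.zero_mul]
        have hA0 : A = 0 := by
          rw [hB0] at hrange
          simp only [Matrix.mulVecLin_zero, LinearMap.range_zero, le_bot_iff,
            LinearMap.range_eq_bot] at hrange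
          ext i j
          have h2 := congrFun (congrArg (fun f => f (Pi.single j 1)) (congrArg DFunLike.coe hrange)) i
          simpa [Matrix.mulVecLin, Matrix.mulVec_single] using h2
        exact ⟨0, le_refl 0, by rw [hA0, hB0, smul_zero]⟩
      · have hTbpos : 0 < Tb := lt_of_le_of_ne hTbnn (Ne.symm hTb0)
        refine ⟨Ta / Tb, div_nonneg hTann hTbnn, ?_⟩
        rw [hsmul, bridge]
        intro i j
        by_cases hW0 : (star U' * V') i j = 0
        · rw [hW0]; ring
        · have ht0 : t i j ≠ 0 := by simpa [htdef, Complex.normSq_eq_zero] using hW0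
          have hC' := hC i j
          have hreal : Tb * a i = Ta * b j := by
            refine mul_right_cancel₀ ht0 ?_
            calc Tb * a i * t i j = Tb * (a i * t i j) := by ring
              _ = Ta * (b j * t i j) := hC'
              _ = Ta * b j * t i j := by ring
          have hval : a i = (Ta / Tb) * b j := by
            field_simp
            linarith [hreal]
          rw [hval]
          push_cast
          ring
    · rintro ⟨c, hc, hAcB⟩
      rw [hsmul] at hAcB
      have hent := (bridge (c : ℂ)).mp hAcB
      have hTaTb : Ta = c * Tb := by
        have h2 := congrArg Matrix.trace hAcB
        rw [Matrix.trace_smul, htrA, htrB] at h2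
        have h3 : ((Ta : ℝ) : ℂ) = ((c * Tb : ℝ) : ℂ) := by
          rw [h2]; push_cast; rw [smul_eq_mul]
        exact_mod_cast h3
      intro i j
      have h2 := hent i j
      have h3 : ((a i : ℝ) : ℂ) * ((star U' * V') i j * star ((star U' * V') i j))
          = (c : ℂ) * (((b j : ℝ) : ℂ) * ((star U' * V') i j * star ((star U' * V') i j))) := by
        calc ((a i : ℝ) : ℂ) * ((star U' * V') i j * star ((star U' * V') i j))
            = (((a i : ℝ) : ℂ) * (star U' * V') i j) * star ((star U' * V') i j) := by ring
          _ = ((c : ℂ) * ((star U' * V') i j * ((b j : ℝ) : ℂ))) * star ((star U' * V') i j) := by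
              rw [h2]
          _ = (c : ℂ) * (((b j : ℝ) : ℂ) * ((star U' * V') i j * star ((star U' * V') i j))) := by
              ring
      rw [Complex.star_def, Complex.mul_conj] at h3
      have h4 : a i * t i j = c * (b j * t i j) := by exact_mod_cast h3
      rw [h4, hTaTb]
      ring
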